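/- Let n be a positive integer and let A be a real-linear map from the real vector space of Hermitian n×n complex matrices to itself. Then ⟨A(X), Y⟩ ≥ 0 holds for all positive semidefinite matrices X, Y with ⟨X, Y⟩ = 0 if and only if v* A(u u*) v ≥ 0 for all u, v ∈ ℂⁿ with v* u = 0. -/

import Mathlib

open Matrix
open scoped ComplexOrder

section Aux

variable {n : ℕ}

/-- Outer product is positive semidefinite. -/
lemma aux_psd (u : Fin n → ℂ) : (vecMulVec u (star u)).PosSemidef := by
  rw [posSemidef_iff_dotProduct_mulVec]
  constructor
  · ext i j
    simp [vecMulVec_apply, conjTranspose_apply, mul_comm]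
  · intro x
    have : star x ⬝ᵥ (vecMulVec u (star u)) *ᵥ x = star (star u ⬝ᵥ x) * (star u ⬝ᵥ x) := by
      simp only [dotProduct, mulVec, vecMulVec_apply, Finset.mul_sum, Finset.sum_mul,
        star_sum, star_mul', Pi.star_apply, star_star]
      rw [Finset.sum_comm]
      refine Finset.sum_congr rfl fun i _ => Finset.sum_congr rfl fun j _ => by ring
    rw [this]
    exact star_mul_self_nonneg _

lemma aux_trace (M : Matrix (Fin n) (Fin n) ℂ) (v : Fin n → ℂ) :
    (M * vecMulVec v (star v)).trace = star v ⬝ᵥ (M *ᵥ v) := by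
  simp only [trace, diag, mul_apply, vecMulVec_apply, dotProduct, mulVec, Pi.star_apply]
  refine Finset.sum_congr rfl fun i _ => ?_
  rw [Finset.mul_sum]
  exact Finset.sum_congr rfl fun j _ => by ring

lemma aux_trace2 (u v : Fin n → ℂ) :
    (vecMulVec u (star u) * vecMulVec v (star v)).trace
      = star (star v ⬝ᵥ u) * (star v ⬝ᵥ u) := by
  rw [aux_trace]
  simp only [dotProduct, mulVec, vecMulVec_apply, Pi.star_apply, star_sum, star_mul',
    star_star, Finset.mul_sum, Finset.sum_mul]
  refine Finset.sum_congr rfl fun i _ => Finset.sum_congr rfl fun j _ => ?_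
  ring

/-- Rank-one decomposition of a Hermitian matrix. -/
lemma aux_decomp (X : Matrix (Fin n) (Fin n) ℂ) (hX : X.IsHermitian) :
    X = ∑ i, hX.eigenvalues i •
      vecMulVec (fun k => (hX.eigenvectorUnitary : Matrix (Fin n) (Fin n) ℂ) k i)
        (star fun k => (hX.eigenvectorUnitary : Matrix (Fin n) (Fin n) ℂ) k i) := by
  conv_lhs => rw [hX.spectral_theorem]
  rw [Unitary.conjStarAlgAut_apply]
  ext j k
  simp only [Matrix.sum_apply, Matrix.smul_apply, vecMulVec_apply, mul_apply, diagonal_apply,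
    Function.comp_apply, Pi.star_apply, star_apply, ite_mul, zero_mul]
  simp only [mul_ite, mul_zero, Finset.sum_ite_eq', Finset.mem_univ, if_true]
  refine Finset.sum_congr rfl fun i _ => ?_
  simp only [conjTranspose_apply, Complex.real_smul, smul_eq_mul]
  rw [mul_right_comm]
  exact mul_comm _ _

end Aux

/-- **Cross-positivity on rank-one matrices suffices.**
For a real-linear map `A` on the space of Hermitian `n × n` complex matrices (i.e. a real-linear
map on matrices sending Hermitian matrices to Hermitian matrices), one has
`⟨A X, Y⟩ = Tr((A X) Y) ≥ 0` for all positive semidefinite `X, Y` with `⟨X, Y⟩ = Tr(X Y) = 0`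
if and only if `v* A(u u*) v ≥ 0` for all `u, v ∈ ℂⁿ` with `v* u = 0`. -/
theorem cross_positive_iff_rank_one (n : ℕ) (hn : 0 < n)
    (A : Matrix (Fin n) (Fin n) ℂ →ₗ[ℝ] Matrix (Fin n) (Fin n) ℂ)
    (hA : ∀ X : Matrix (Fin n) (Fin n) ℂ, X.IsHermitian → (A X).IsHermitian) :
    (∀ X Y : Matrix (Fin n) (Fin n) ℂ, X.PosSemidef → Y.PosSemidef →
        (X * Y).trace = 0 → 0 ≤ ((A X) * Y).trace) ↔
      ∀ u v : Fin n → ℂ, star v ⬝ᵥ u = 0 →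
        0 ≤ star v ⬝ᵥ (A (vecMulVec u (star u)) *ᵥ v) := by
  constructor
  · intro h u v hvu
    have := h (vecMulVec u (star u)) (vecMulVec v (star v)) (aux_psd u) (aux_psd v)
      (by rw [aux_trace2, hvu, mul_zero])
    rwa [aux_trace] at this
  · intro h X Y hX hY htr
    set uu : Fin n → Fin n → ℂ :=
      fun i k => (hX.1.eigenvectorUnitary : Matrix (Fin n) (Fin n) ℂ) k i with huu
    set vv : Fin n → Fin n → ℂ :=
      fun j k => (hY.1.eigenvectorUnitary : Matrix (Fin n) (Fin n) ℂ) k j with hvv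
    set lam := hX.1.eigenvalues with hlamdef
    set mu := hY.1.eigenvalues with hmudef
    have hlam : ∀ i, 0 ≤ lam i := hX.eigenvalues_nonneg
    have hmu : ∀ j, 0 ≤ mu j := hY.eigenvalues_nonneg
    set P : Fin n → Matrix (Fin n) (Fin n) ℂ := fun i => vecMulVec (uu i) (star (uu i)) with hP
    set Q : Fin n → Matrix (Fin n) (Fin n) ℂ := fun j => vecMulVec (vv j) (star (vv j)) with hQ
    have hXd : X = ∑ i, lam i • P i := aux_decomp X hX.1
    have hYd : Y = ∑ j, mu j • Q j := aux_decomp Y hY.1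
    have mul_expand : ∀ M N : Fin n → Matrix (Fin n) (Fin n) ℂ,
        (∑ i, lam i • M i) * (∑ j, mu j • N j)
          = ∑ i, ∑ j, (lam i * mu j) • (M i * N j) := by
      intro M N
      rw [Finset.sum_mul]
      refine Finset.sum_congr rfl fun i _ => ?_
      rw [Finset.mul_sum]
      refine Finset.sum_congr rfl fun j _ => ?_
      rw [smul_mul_assoc, Matrix.mul_smul, smul_smul]
    -- each term of Tr(X Y) is nonneg and they sum to zero
    have hterm_nonneg : ∀ i j, (0 : ℂ) ≤ (lam i * mu j) • (P i * Q j).trace := by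
      intro i j
      rw [aux_trace2, Complex.real_smul]
      exact mul_nonneg (by exact_mod_cast mul_nonneg (hlam i) (hmu j)) (star_mul_self_nonneg _)
    have htr' : ∑ i, ∑ j, (lam i * mu j) • (P i * Q j).trace = 0 := by
      rw [← htr, hXd, hYd, mul_expand]
      simp only [trace_sum, trace_smul]
    have hzero : ∀ i j, (lam i * mu j) • (P i * Q j).trace = 0 := by
      intro i j
      have h1 := (Finset.sum_eq_zero_iff_of_nonneg
        (fun i _ => Finset.sum_nonneg fun j _ => hterm_nonneg i j)).mp htr' i (Finset.mem_univ i)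
      exact (Finset.sum_eq_zero_iff_of_nonneg
        (fun j _ => hterm_nonneg i j)).mp h1 j (Finset.mem_univ j)
    -- now expand Tr(A X * Y)
    have hAX : A X = ∑ i, lam i • A (P i) := by
      rw [hXd, map_sum]
      exact Finset.sum_congr rfl fun i _ => A.map_smul _ _
    rw [hAX, hYd, mul_expand]
    simp only [trace_sum, trace_smul]
    refine Finset.sum_nonneg fun i _ => Finset.sum_nonneg fun j _ => ?_
    rcases eq_or_ne (lam i * mu j) 0 with hz | hz
    · rw [hz, zero_smul]
    · have hc : star (vv j) ⬝ᵥ uu i = 0 := by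
        have := hzero i j
        rw [aux_trace2, smul_eq_zero] at this
        rcases this with h' | h'
        · exact absurd h' hz
        · exact (CStarRing.star_mul_self_eq_zero_iff _).mp h'
      have := h (uu i) (vv j) hc
      rw [aux_trace, Complex.real_smul]
      exact mul_nonneg (by exact_mod_cast mul_nonneg (hlam i) (hmu j)) this
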